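/- Every orientation-preserving diffeomorphism of ℝ^m is smoothly isotopic to the identity through diffeomorphisms: if h : ℝ^m → ℝ^m is a smooth bijection with smooth inverse whose differential at every point has positive determinant, then there is a smooth map H : [0,1] × ℝ^m → ℝ^m such that H(0,·) = h, H(1,·) = id, and H(t,·) is a diffeomorphism of ℝ^m for every t ∈ [0,1]. -/

import Mathlib

noncomputable section

/-- Euclidean `m`-space `ℝᵐ`. -/
abbrev Euc (m : ℕ) : Type := EuclideanSpace ℝ (Fin m)

/-- `f : ℝᵐ → ℝᵐ` is a diffeomorphism: a smooth (`C^∞`) bijection with smooth inverse. -/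
def IsDiffeo {m : ℕ} (f : Euc m → Euc m) : Prop :=
  Function.Bijective f ∧ ContDiff ℝ (⊤ : ℕ∞) f ∧ ContDiff ℝ (⊤ : ℕ∞) (Function.invFun f)

open MeasureTheory Set Function Matrix

set_option maxHeartbeats 1000000



set_option maxHeartbeats 1000000

lemma contDiff_parametric_integral
    {E : Type} [NormedAddCommGroup E] [NormedSpace ℝ E] [FiniteDimensional ℝ E]
    (n : ℕ) :
    ∀ (G : Type) [NormedAddCommGroup G] [NormedSpace ℝ G] [FiniteDimensional ℝ G]
      (F : E → ℝ → G), ContDiff ℝ (⊤ : ℕ∞) (Function.uncurry F) →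
      ContDiff ℝ n (fun x => ∫ s in (0:ℝ)..1, F x s) := by
  induction n with
  | zero =>
    intro G _ _ _ F hF
    rw [show ((0:ℕ) : WithTop ℕ∞) = 0 by norm_cast, contDiff_zero]
    exact intervalIntegral.continuous_parametric_intervalIntegral_of_continuous' hF.continuous 0 1
  | succ n ih =>
    intro G _ _ _ F hF
    set F' : E → ℝ → (E →L[ℝ] G) := fun x s => fderiv ℝ (fun y => F y s) x with hF'def
    have hFy : ∀ s : ℝ, ContDiff ℝ (⊤ : ℕ∞) (fun y => F y s) := fun s =>
      hF.comp ((contDiff_id).prodMk contDiff_const)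
    have hF' : ContDiff ℝ (⊤ : ℕ∞) (Function.uncurry F') := by
      have h1 : ContDiff ℝ (⊤ : ℕ∞) (Function.uncurry fun (p : E × ℝ) (y : E) => F y p.2) :=
        hF.comp ((contDiff_snd).prodMk (contDiff_snd.comp contDiff_fst))
      have h2 := h1.fderiv (g := fun p : E × ℝ => p.1) contDiff_fst
        (le_of_eq (show ((⊤:ℕ∞) : WithTop ℕ∞) + 1 = ((⊤:ℕ∞) : WithTop ℕ∞) from rfl))
      exact h2
    have key : ∀ x₀ : E, HasFDerivAt (fun x => ∫ s in (0:ℝ)..1, F x s)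
        (∫ s in (0:ℝ)..1, F' x₀ s) x₀ := by
      intro x₀
      obtain ⟨C, hC⟩ := ((isCompact_closedBall x₀ 1).prod isCompact_uIcc).exists_bound_of_continuousOn
          hF'.continuous.continuousOn
      apply intervalIntegral.hasFDerivAt_integral_of_dominated_of_fderiv_le
        (s := Metric.ball x₀ 1) (bound := fun _ => C) (Metric.ball_mem_nhds x₀ one_pos)
      · exact Filter.Eventually.of_forall fun x =>
          ((hF.comp ((contDiff_const (c := x)).prodMk contDiff_id)).continuous).aestronglyMeasurable
      · exact ((hF.comp ((contDiff_const (c := x₀)).prodMk contDiff_id)).continuous).intervalIntegrable _ _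
      · exact ((hF'.comp ((contDiff_const (c := x₀)).prodMk contDiff_id)).continuous).aestronglyMeasurable
      · refine Filter.Eventually.of_forall fun s hs x hx =>
          hC (x, s) ⟨Metric.ball_subset_closedBall hx, Set.uIoc_subset_uIcc hs⟩
      · exact intervalIntegrable_const
      · refine Filter.Eventually.of_forall fun s _ x _ => ?_
        exact ((hFy s).differentiable (by simp) x).hasFDerivAt
    rw [show (((n+1:ℕ)) : WithTop ℕ∞) = (n : WithTop ℕ∞) + 1 by push_cast; ring,
      contDiff_succ_iff_fderiv]
    refine ⟨fun x => (key x).differentiableAt, by simp, ?_⟩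
    have : (fderiv ℝ fun x => ∫ s in (0:ℝ)..1, F x s) = fun x₀ => ∫ s in (0:ℝ)..1, F' x₀ s :=
      funext fun x₀ => (key x₀).fderiv
    rw [this]
    exact ih (E →L[ℝ] G) F' hF'




variable {m : ℕ}

/-- The matrix-to-CLM map as a plain function. -/
def Phi {m : ℕ} (M : Matrix (Fin m) (Fin m) ℝ) : Euc m →L[ℝ] Euc m :=
  Matrix.toEuclideanCLM (𝕜 := ℝ) M

/-- `Phi` as a linear map. -/
def PhiL (m : ℕ) : Matrix (Fin m) (Fin m) ℝ →ₗ[ℝ] (Euc m →L[ℝ] Euc m) where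
  toFun := Phi
  map_add' M N := by simp [Phi, _root_.map_add]
  map_smul' c M := by simp [Phi, _root_.map_smul]

lemma Phi_mul (M N : Matrix (Fin m) (Fin m) ℝ) : Phi (M * N) = Phi M * Phi N := by
  simp [Phi, _root_.map_mul]

lemma Phi_one : Phi (1 : Matrix (Fin m) (Fin m) ℝ) = 1 := by simp [Phi, _root_.map_one]

lemma isUnit_Phi {M : Matrix (Fin m) (Fin m) ℝ} (h : M.det ≠ 0) : IsUnit (Phi M) := by
  have : IsUnit M := (Matrix.isUnit_iff_isUnit_det M).2 (isUnit_iff_ne_zero.2 h)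
  exact this.map (Matrix.toEuclideanCLM (𝕜 := ℝ))

/-- Predicate: `A` is connected to `1` by a smooth path of continuous linear maps
that are invertible for all times in `[0,1]`. -/
def Pth {m : ℕ} (A : Euc m →L[ℝ] Euc m) : Prop :=
  ∃ γ : ℝ → (Euc m →L[ℝ] Euc m), ContDiff ℝ (⊤ : ℕ∞) γ ∧ γ 0 = A ∧ γ 1 = 1 ∧
    ∀ t ∈ Set.Icc (0:ℝ) 1, IsUnit (γ t)

lemma pth_one : Pth (1 : Euc m →L[ℝ] Euc m) :=
  ⟨fun _ => 1, contDiff_const, rfl, rfl, fun _ _ => isUnit_one⟩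

lemma Pth.mul {A B : Euc m →L[ℝ] Euc m} (hA : Pth A) (hB : Pth B) : Pth (A * B) := by
  obtain ⟨γ, hγ, hγ0, hγ1, hγu⟩ := hA
  obtain ⟨δ, hδ, hδ0, hδ1, hδu⟩ := hB
  refine ⟨fun t => γ t * δ t, ?_, by simp [hγ0, hδ0], by simp [hγ1, hδ1],
    fun t ht => (hγu t ht).mul (hδu t ht)⟩
  exact hγ.clm_comp hδ

/-- Linear maps from finite-dimensional spaces are smooth. -/
lemma LinearMap.contDiff'' {V W : Type*} [NormedAddCommGroup V] [NormedSpace ℝ V]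
    [FiniteDimensional ℝ V] [NormedAddCommGroup W] [NormedSpace ℝ W]
    (L : V →ₗ[ℝ] W) : ContDiff ℝ (⊤ : ℕ∞) L :=
  (LinearMap.toContinuousLinearMap L).contDiff


lemma Phi_add (M N : Matrix (Fin m) (Fin m) ℝ) : Phi (M + N) = Phi M + Phi N := by
  simp [Phi, _root_.map_add]

lemma Phi_smul (c : ℝ) (M : Matrix (Fin m) (Fin m) ℝ) : Phi (c • M) = c • Phi M := by
  simp [Phi, _root_.map_smul]

lemma Phi_transvection (i j : Fin m) (c : ℝ) :
    Phi (Matrix.transvection i j c) = Phi 1 + c • Phi (Matrix.single i j 1) := by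
  rw [Matrix.transvection, Phi_add, ← Phi_smul, Matrix.smul_single, smul_eq_mul, mul_one]

/-- Transvections are smoothly isotopic to the identity through invertible maps. -/
lemma pth_transvection (t : Matrix.TransvectionStruct (Fin m) ℝ) : Pth (Phi t.toMatrix) := by
  obtain ⟨i, j, hij, c⟩ := t
  refine ⟨fun u => Phi (Matrix.transvection i j ((1 - u) * c)), ?_, ?_, ?_, ?_⟩
  · simp only [Phi_transvection]
    exact contDiff_const.add (((contDiff_const.sub contDiff_id).mul contDiff_const).smul
      contDiff_const)
  · norm_num
  · norm_num [Matrix.transvection_zero, Phi_one]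
  · intro u _
    exact isUnit_Phi (by rw [Matrix.det_transvection_of_ne i j hij]; norm_num)

/-- `Matrix.diagonal` as a linear map. -/
def diagL (m : ℕ) : (Fin m → ℝ) →ₗ[ℝ] Matrix (Fin m) (Fin m) ℝ where
  toFun := Matrix.diagonal
  map_add' a b := (Matrix.diagonal_add a b).symm
  map_smul' r a := Matrix.diagonal_smul r a

/-- Positive diagonal matrices. -/
lemma pth_diagonal_pos {d : Fin m → ℝ} (hd : ∀ i, 0 < d i) :
    Pth (Phi (Matrix.diagonal d)) := by
  set DL : (Fin m → ℝ) →ₗ[ℝ] (Euc m →L[ℝ] Euc m) := (PhiL m).comp (diagL m) with hDL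
  have hDLeq : ∀ v : Fin m → ℝ, DL v = Phi (Matrix.diagonal v) := fun v => rfl
  refine ⟨fun u => DL (fun i => (1 - u) * d i + u), ?_, ?_, ?_, ?_⟩
  · exact (DL.contDiff'').comp (contDiff_pi.2 fun i =>
      ((contDiff_const.sub contDiff_id).mul contDiff_const).add contDiff_id)
  · simp only [hDLeq]
    have : (fun i => (1 - (0:ℝ)) * d i + 0) = d := by funext i; ring
    rw [this]
  · simp only [hDLeq]
    have : (fun i => (1 - (1:ℝ)) * d i + 1) = fun _ => (1:ℝ) := by funext i; ring
    rw [this, show Matrix.diagonal (fun _ : Fin m => (1:ℝ)) = 1 from Matrix.diagonal_one, Phi_one]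
  · intro u hu
    have hpos : ∀ i, 0 < (1 - u) * d i + u := by
      intro i
      rcases eq_or_lt_of_le hu.1 with h0 | h0
      · simpa [← h0] using hd i
      · have : 0 ≤ (1 - u) * d i := mul_nonneg (by linarith [hu.2]) (hd i).le
        linarith
    simp only [hDLeq]
    exact isUnit_Phi (by
      rw [Matrix.det_diagonal]
      exact ne_of_gt (Finset.prod_pos fun i _ => hpos i))

section Rotation

variable (i j : Fin m)

def Pm (i j : Fin m) : Matrix (Fin m) (Fin m) ℝ :=
  Matrix.single i i 1 + Matrix.single j j 1

def Km (i j : Fin m) : Matrix (Fin m) (Fin m) ℝ :=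
  Matrix.single j i 1 - Matrix.single i j 1

def Rm (i j : Fin m) (θ : ℝ) : Matrix (Fin m) (Fin m) ℝ :=
  1 + (Real.cos θ - 1) • Pm i j + Real.sin θ • Km i j

variable {i j}

lemma hPP (hij : i ≠ j) : Pm i j * Pm i j = Pm i j := by
  have hji := hij.symm
  simp [Pm, add_mul, mul_add, Matrix.single_mul_single_same,
    Matrix.single_mul_single_of_ne, hij, hji]

lemma hPK (hij : i ≠ j) : Pm i j * Km i j = Km i j := by
  have hji := hij.symm
  simp [Pm, Km, add_mul, mul_add, mul_sub, sub_mul, Matrix.single_mul_single_same,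
    Matrix.single_mul_single_of_ne, hij, hji]
  try abel

lemma hKP (hij : i ≠ j) : Km i j * Pm i j = Km i j := by
  have hji := hij.symm
  simp [Pm, Km, add_mul, mul_add, mul_sub, sub_mul, Matrix.single_mul_single_same,
    Matrix.single_mul_single_of_ne, hij, hji]
  try abel

lemma hKK (hij : i ≠ j) : Km i j * Km i j = -(Pm i j) := by
  have hji := hij.symm
  simp [Pm, Km, add_mul, mul_add, mul_sub, sub_mul, Matrix.single_mul_single_same,
    Matrix.single_mul_single_of_ne, hij, hji]
  try abel

lemma Rm_mul_Rm_neg (hij : i ≠ j) (θ : ℝ) : Rm i j θ * Rm i j (-θ) = 1 := by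
  have key := Real.sin_sq_add_cos_sq θ
  simp only [Rm, Real.cos_neg, Real.sin_neg]
  simp only [add_mul, mul_add, one_mul, mul_one, smul_mul_assoc, mul_smul_comm,
    mul_neg, neg_mul, hPP hij, hPK hij, hKP hij, hKK hij, smul_smul, smul_neg, neg_smul]
  match_scalars <;> ring_nf <;> linarith [key]

lemma Rm_zero : Rm i j 0 = 1 := by
  simp [Rm]

lemma isUnit_Phi_Rm (hij : i ≠ j) (θ : ℝ) : IsUnit (Phi (Rm i j θ)) := by
  refine ⟨⟨Phi (Rm i j θ), Phi (Rm i j (-θ)), ?_, ?_⟩, rfl⟩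
  · rw [← Phi_mul, Rm_mul_Rm_neg hij, Phi_one]
  · rw [← Phi_mul]
    have := Rm_mul_Rm_neg hij (-θ)
    rw [neg_neg] at this
    rw [this, Phi_one]

lemma Phi_Rm (θ : ℝ) : Phi (Rm i j θ) =
    Phi 1 + (Real.cos θ - 1) • Phi (Pm i j) + Real.sin θ • Phi (Km i j) := by
  rw [Rm, Phi_add, Phi_add, Phi_smul, Phi_smul]

/-- At angle `π`, the rotation is the sign-flip diagonal matrix at `i, j`. -/
lemma Rm_pi (hij : i ≠ j) :
    Rm i j Real.pi = Matrix.diagonal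
      (fun k => (if k = i then (-1:ℝ) else 1) * (if k = j then (-1:ℝ) else 1)) := by
  ext k l
  simp only [Rm, Real.cos_pi, Real.sin_pi, Pm, Km, Matrix.add_apply, Matrix.smul_apply,
    Matrix.sub_apply, Matrix.one_apply, Matrix.diagonal_apply, Matrix.single,
    Matrix.of_apply, smul_eq_mul]
  by_cases hkl : k = l <;> by_cases hki : k = i <;> by_cases hkj : k = j <;>
    simp_all <;> split_ifs <;> simp_all <;> ring

lemma pth_rot (hij : i ≠ j) :
    Pth (Phi (Matrix.diagonal
      (fun k => (if k = i then (-1:ℝ) else 1) * (if k = j then (-1:ℝ) else 1)))) := by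
  refine ⟨fun u => Phi (Rm i j ((1 - u) * Real.pi)), ?_, ?_, ?_, ?_⟩
  · simp only [Phi_Rm]
    have hsm : ContDiff ℝ (⊤:ℕ∞) (fun u : ℝ => (1 - u) * Real.pi) :=
      (contDiff_const.sub contDiff_id).mul contDiff_const
    exact (contDiff_const.add (((Real.contDiff_cos.comp hsm).sub contDiff_const).smul
      contDiff_const)).add ((Real.contDiff_sin.comp hsm).smul contDiff_const)
  · norm_num [Rm_pi hij]
  · norm_num [Rm_zero, Phi_one]
  · exact fun u _ => isUnit_Phi_Rm hij _

end Rotation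

lemma pth_sign : ∀ (N : ℕ) (ε : Fin m → ℝ), (∀ i, ε i = 1 ∨ ε i = -1) →
    (∏ i, ε i) = 1 → (Finset.univ.filter fun i => ε i = -1).card ≤ N →
    Pth (Phi (Matrix.diagonal ε)) := by
  intro N
  induction N with
  | zero =>
    intro ε hε hprod hcard
    have hall : ∀ i, ε i = 1 := by
      intro i
      rcases hε i with h | h
      · exact h
      · exfalso
        have : i ∈ Finset.univ.filter fun i => ε i = -1 := by
          simp [h]
        have := Finset.card_pos.2 ⟨i, this⟩
        omega
    have : ε = fun _ => (1:ℝ) := funext hall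
    rw [this, show Matrix.diagonal (fun _ : Fin m => (1:ℝ)) = 1 from Matrix.diagonal_one, Phi_one]
    exact pth_one
  | succ N ih =>
    intro ε hε hprod hcard
    set S := Finset.univ.filter fun i => ε i = -1 with hSdef
    rcases Finset.eq_empty_or_nonempty S with hS | hS
    · have hall : ∀ i, ε i = 1 := by
        intro i
        rcases hε i with h | h
        · exact h
        · exact absurd (Finset.mem_filter.2 ⟨Finset.mem_univ i, h⟩)
            (by rw [← hSdef, hS]; simp)
      have : ε = fun _ => (1:ℝ) := funext hall
      rw [this, show Matrix.diagonal (fun _ : Fin m => (1:ℝ)) = 1 from Matrix.diagonal_one,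
        Phi_one]
      exact pth_one
    · obtain ⟨i, hi⟩ := hS
      have hεi : ε i = -1 := (Finset.mem_filter.1 hi).2
      rcases Finset.eq_empty_or_nonempty (S.erase i) with hS' | hS'
      · exfalso
        have hother : ∀ k, k ≠ i → ε k = 1 := by
          intro k hk
          rcases hε k with h | h
          · exact h
          · exact absurd (Finset.mem_erase.2 ⟨hk, Finset.mem_filter.2 ⟨Finset.mem_univ k, h⟩⟩)
              (by rw [hS']; simp)
        have : (∏ k, ε k) = ε i * ∏ k ∈ Finset.univ.erase i, ε k :=
          (Finset.mul_prod_erase Finset.univ ε (Finset.mem_univ i)).symm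
        rw [Finset.prod_eq_one (fun k hk => hother k (Finset.mem_erase.1 hk).1)] at this
        rw [this, hεi] at hprod
        norm_num at hprod
      · obtain ⟨j, hj⟩ := hS'
        have hji : j ≠ i := (Finset.mem_erase.1 hj).1
        have hij : i ≠ j := hji.symm
        have hεj : ε j = -1 := (Finset.mem_filter.1 (Finset.mem_erase.1 hj).2).2
        set ρ : Fin m → ℝ := fun k => (if k = i then (-1:ℝ) else 1) * (if k = j then -1 else 1)
          with hρdef
        set ε' : Fin m → ℝ := fun k => ρ k * ε k with hε'def
        have hρi : ρ i = -1 := by simp [hρdef, hij]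
        have hρj : ρ j = -1 := by simp [hρdef, hji]
        have hρother : ∀ k, k ≠ i → k ≠ j → ρ k = 1 := by
          intro k h1 h2; simp [hρdef, h1, h2]
        have hρsq : ∀ k, ρ k * ρ k = 1 := by
          intro k
          by_cases h1 : k = i <;> by_cases h2 : k = j
          · exact absurd (h1.symm.trans h2) hij
          all_goals simp [hρdef, h1, h2, hij, hji]
        have hεfact : ε = fun k => ρ k * ε' k := by
          funext k
          rw [hε'def]
          show ε k = ρ k * (ρ k * ε k)
          rw [← mul_assoc, hρsq, one_mul]
        have hprodρ : (∏ k, ρ k) = 1 := by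
          rw [hρdef, Finset.prod_mul_distrib]
          simp [Finset.prod_ite_eq']
        have hε'val : ∀ k, ε' k = 1 ∨ ε' k = -1 := by
          intro k
          by_cases h1 : k = i
          · subst h1; left; simp [hε'def, hρi, hεi]
          · by_cases h2 : k = j
            · subst h2; left; simp [hε'def, hρj, hεj]
            · rw [hε'def]
              show ρ k * ε k = 1 ∨ ρ k * ε k = -1
              rw [hρother k h1 h2, one_mul]
              exact hε k
        have hε'prod : (∏ k, ε' k) = 1 := by
          rw [hε'def]
          show (∏ k, ρ k * ε k) = 1
          rw [Finset.prod_mul_distrib, hprodρ, one_mul, hprod]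
        have hsub : (Finset.univ.filter fun k => ε' k = -1) ⊆ S.erase i := by
          intro k hk
          have hk' : ε' k = -1 := (Finset.mem_filter.1 hk).2
          by_cases h1 : k = i
          · exfalso; rw [h1, hε'def] at hk'
            simp only [hρi, hεi] at hk'
            norm_num at hk'
          · by_cases h2 : k = j
            · exfalso; rw [h2, hε'def] at hk'
              simp only [hρj, hεj] at hk'
              norm_num at hk'
            · refine Finset.mem_erase.2 ⟨h1, Finset.mem_filter.2 ⟨Finset.mem_univ k, ?_⟩⟩
              have := hρother k h1 h2
              rw [hε'def] at hk'
              simp only [this, one_mul] at hk'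
              exact hk'
        have hcard' : (Finset.univ.filter fun k => ε' k = -1).card ≤ N := by
          have h1 := Finset.card_le_card hsub
          have h2 := Finset.card_erase_of_mem hi
          omega
        have hdiag : Matrix.diagonal ε = Matrix.diagonal ρ * Matrix.diagonal ε' := by
          rw [Matrix.diagonal_mul_diagonal]
          rw [hεfact]
        rw [hdiag, Phi_mul]
        exact (pth_rot hij).mul (ih ε' hε'val hε'prod hcard')

lemma pth_diagonal {d : Fin m → ℝ} (h : 0 < ∏ i, d i) : Pth (Phi (Matrix.diagonal d)) := by
  have hne : ∀ i, d i ≠ 0 := by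
    intro i hi
    rw [Finset.prod_eq_zero (Finset.mem_univ i) hi] at h
    exact lt_irrefl 0 h
  set ε : Fin m → ℝ := fun i => if d i < 0 then -1 else 1 with hεdef
  set p : Fin m → ℝ := fun i => |d i| with hpdef
  have hppos : ∀ i, 0 < p i := fun i => abs_pos.2 (hne i)
  have hd : d = fun i => ε i * p i := by
    funext i
    by_cases hi : d i < 0
    · simp [hεdef, hpdef, hi, abs_of_neg hi]
    · simp [hεdef, hpdef, hi, abs_of_nonneg (not_lt.1 hi)]
  have hprodp : 0 < ∏ i, p i := Finset.prod_pos fun i _ => hppos i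
  have hprodd : (∏ i, d i) = (∏ i, ε i) * ∏ i, p i := by
    rw [hd]; exact Finset.prod_mul_distrib
  have hprodε_pos : 0 < ∏ i, ε i := by
    by_contra hc
    push_neg at hc
    nlinarith
  have hεval : ∀ i, ε i = 1 ∨ ε i = -1 := by
    intro i; by_cases hi : d i < 0 <;> simp [hεdef, hi]
  have hprodε : (∏ i, ε i) = 1 := by
    rcases Finset.prod_induction ε (fun x => x = 1 ∨ x = -1)
      (fun a b ha hb => by rcases ha with h|h <;> rcases hb with h'|h' <;> simp [h,h'])
      (Or.inl rfl) (fun i _ => hεval i) with h | h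
    · exact h
    · rw [h] at hprodε_pos; norm_num at hprodε_pos
  have : Matrix.diagonal d = Matrix.diagonal ε * Matrix.diagonal p := by
    rw [Matrix.diagonal_mul_diagonal, hd]
  rw [this, Phi_mul]
  exact (pth_sign _ ε hεval hprodε le_rfl).mul (pth_diagonal_pos hppos)

/-- Any square matrix with positive determinant gives a CLM smoothly isotopic to
the identity through invertible maps. -/
lemma pth_of_pos_det (M : Matrix (Fin m) (Fin m) ℝ) (h : 0 < M.det) : Pth (Phi M) := by
  refine Matrix.diagonal_transvection_induction (fun N => Pth (Phi N)) M ?_ pth_transvection ?_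
  · intro D hD
    apply pth_diagonal
    rw [← Matrix.det_diagonal (d := D), hD]
    exact h
  · intro A B hA hB
    rw [Phi_mul]
    exact hA.mul hB





variable {m : ℕ}

lemma invFun_eq_of_inv {α : Type*} [Nonempty α] {f g : α → α}
    (h1 : ∀ x, g (f x) = x) (h2 : ∀ x, f (g x) = x) : Function.invFun f = g := by
  have hs : Function.Surjective f := fun y => ⟨g y, h2 y⟩
  have hinj : Function.Injective f := fun a b hab => by rw [← h1 a, hab, h1 b]
  funext y
  have hfy : f (Function.invFun f y) = y := Function.invFun_eq (hs y)
  apply hinj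
  rw [hfy, h2 y]

lemma isDiffeo_mk {f g : Euc m → Euc m} (hf : ContDiff ℝ (⊤ : ℕ∞) f)
    (hg : ContDiff ℝ (⊤ : ℕ∞) g) (h1 : ∀ x, g (f x) = x) (h2 : ∀ x, f (g x) = x) :
    IsDiffeo f := by
  refine ⟨⟨fun a b hab => by rw [← h1 a, hab, h1 b], fun y => ⟨g y, h2 y⟩⟩, hf, ?_⟩
  rw [invFun_eq_of_inv h1 h2]
  exact hg

lemma IsDiffeo.comp {f g : Euc m → Euc m} (hf : IsDiffeo f) (hg : IsDiffeo g) :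
    IsDiffeo (f ∘ g) := by
  obtain ⟨hfb, hfs, hfi⟩ := hf
  obtain ⟨hgb, hgs, hgi⟩ := hg
  refine isDiffeo_mk (hfs.comp hgs) (hgi.comp hfi) ?_ ?_
  · intro x
    simp only [Function.comp_apply]
    rw [Function.leftInverse_invFun hfb.1 _, Function.leftInverse_invFun hgb.1 _]
  · intro x
    simp only [Function.comp_apply]
    rw [Function.invFun_eq (hgb.2 _), Function.invFun_eq (hfb.2 _)]

lemma isDiffeo_translate (c : Euc m) : IsDiffeo (fun x : Euc m => x + c) :=
  isDiffeo_mk (contDiff_id.add contDiff_const) (contDiff_id.sub contDiff_const)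
    (fun x => add_sub_cancel_right x c) (fun x => sub_add_cancel x c)

lemma isDiffeo_clm_unit {L : Euc m →L[ℝ] Euc m} (h : IsUnit L) : IsDiffeo ⇑L := by
  obtain ⟨u, rfl⟩ := h
  refine isDiffeo_mk (u.val.contDiff) ((u⁻¹).val.contDiff) ?_ ?_
  · intro x
    show (u⁻¹.val * u.val) x = x
    rw [u.inv_mul]
    rfl
  · intro x
    show (u.val * u⁻¹.val) x = x
    rw [u.mul_inv]
    rfl

/-- Determinant bridge: the matrix representing a CLM has the same determinant. -/
lemma det_toEuclideanCLM_symm (A : Euc m →L[ℝ] Euc m) :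
    ((Matrix.toEuclideanCLM (𝕜 := ℝ)).symm A).det = A.det := by
  set M := (Matrix.toEuclideanCLM (𝕜 := ℝ)).symm A with hM
  have h1 : (A : Euc m →ₗ[ℝ] Euc m) = Matrix.toEuclideanLin M := by
    rw [← Matrix.coe_toEuclideanCLM_eq_toEuclideanLin]
    congr 1
    rw [hM, StarAlgEquiv.apply_symm_apply]
  show M.det = LinearMap.det (A : Euc m →ₗ[ℝ] Euc m)
  rw [h1, Matrix.toEuclideanLin_eq_toLin_orthonormal, LinearMap.det_toLin]


section Alexander

variable {m : ℕ}

lemma Gmap_smooth {g : Euc m → Euc m} (hg : ContDiff ℝ (⊤ : ℕ∞) g) :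
    ContDiff ℝ (⊤ : ℕ∞)
      (fun p : ℝ × Euc m => ∫ s in (0:ℝ)..1, (fderiv ℝ g (s • (p.1 • p.2))) p.2) := by
  have hD : ContDiff ℝ (⊤ : ℕ∞) (fderiv ℝ g) :=
    hg.fderiv_right (le_of_eq (show ((⊤:ℕ∞) : WithTop ℕ∞) + 1 = ((⊤:ℕ∞) : WithTop ℕ∞) from rfl))
  have hint : ContDiff ℝ (⊤ : ℕ∞) (Function.uncurry (fun (p : ℝ × Euc m) (s : ℝ) =>
      (fderiv ℝ g (s • (p.1 • p.2))) p.2)) := by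
    have hpt : ContDiff ℝ (⊤ : ℕ∞) (fun w : (ℝ × Euc m) × ℝ => w.2 • (w.1.1 • w.1.2)) :=
      contDiff_snd.smul ((contDiff_fst.comp contDiff_fst).smul (contDiff_snd.comp contDiff_fst))
    exact (isBoundedBilinearMap_apply.contDiff).comp
      ((hD.comp hpt).prodMk (contDiff_snd.comp contDiff_fst))
  exact contDiff_infty.2 fun n => contDiff_parametric_integral n (Euc m) _ hint

lemma Gmap_spec {g : Euc m → Euc m} (hg : ContDiff ℝ (⊤ : ℕ∞) g) (t : ℝ) (x : Euc m) :
    t • (∫ s in (0:ℝ)..1, (fderiv ℝ g (s • (t • x))) x) = g (t • x) - g 0 := by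
  set v := t • x with hv
  have hD : ContDiff ℝ (⊤ : ℕ∞) (fderiv ℝ g) :=
    hg.fderiv_right (le_of_eq (show ((⊤:ℕ∞) : WithTop ℕ∞) + 1 = ((⊤:ℕ∞) : WithTop ℕ∞) from rfl))
  have hderiv : ∀ s ∈ Set.uIcc (0:ℝ) 1, HasDerivAt (fun s : ℝ => g (s • v))
      ((fderiv ℝ g (s • v)) v) s := by
    intro s _
    have h1 : HasDerivAt (fun s : ℝ => s • v) v s := by
      simpa using (hasDerivAt_id s).smul_const v
    exact ((hg.differentiable (by simp) (s • v)).hasFDerivAt).comp_hasDerivAt s h1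
  have hcont : Continuous (fun s : ℝ => (fderiv ℝ g (s • v)) v) := by
    have hsv : Continuous (fun s : ℝ => s • v) := (continuous_id.smul continuous_const)
    exact (isBoundedBilinearMap_apply.continuous).comp
      ((hD.continuous.comp hsv).prodMk continuous_const)
  have key := intervalIntegral.integral_eq_sub_of_hasDerivAt hderiv (hcont.intervalIntegrable 0 1)
  have hsw : ∀ s : ℝ, t • ((fderiv ℝ g (s • v)) x) = (fderiv ℝ g (s • v)) v := by
    intro s
    rw [hv, ← (fderiv ℝ g (s • v)).map_smul]
  rw [← intervalIntegral.integral_smul,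
    intervalIntegral.integral_congr (fun s _ => hsw s), key]
  simp

lemma Gmap_zero {g : Euc m → Euc m} (x : Euc m) :
    (∫ s in (0:ℝ)..1, (fderiv ℝ g (s • ((0:ℝ) • x))) x) = (fderiv ℝ g 0) x := by
  simp

end Alexander


/-- Every orientation-preserving diffeomorphism `h` of `ℝᵐ` (a diffeomorphism whose
differential has positive determinant at every point) is smoothly isotopic to the
identity through diffeomorphisms: there is a map `H`, smooth on `[0,1] × ℝᵐ`, with
`H(0,·) = h`, `H(1,·) = id`, and `H(t,·)` a diffeomorphism for every `t ∈ [0,1]`. -/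
theorem orientation_preserving_diffeo_isotopic_to_id (m : ℕ) (h : Euc m → Euc m)
    (hdiffeo : IsDiffeo h)
    (hor : ∀ x, 0 < (fderiv ℝ h x).det) :
    ∃ H : ℝ → Euc m → Euc m,
      ContDiffOn ℝ (⊤ : ℕ∞) (fun p : ℝ × Euc m => H p.1 p.2)
        (Set.Icc (0 : ℝ) 1 ×ˢ Set.univ) ∧
      H 0 = h ∧ H 1 = id ∧
      ∀ t ∈ Set.Icc (0 : ℝ) 1, IsDiffeo (H t) := by
  obtain ⟨hbij, hsm, hinvsm⟩ := hdiffeo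
  set c : Euc m := h 0 with hc
  set g : Euc m → Euc m := fun x => h x - c with hgdef
  have hg : ContDiff ℝ (⊤ : ℕ∞) g := hsm.sub contDiff_const
  have hg0 : g 0 = 0 := sub_self _
  have hgdiffeo : IsDiffeo g := by
    have : g = (fun y => y + (-c)) ∘ h := by
      funext x; simp [hgdef, sub_eq_add_neg]
    rw [this]
    exact (isDiffeo_translate (-c)).comp ⟨hbij, hsm, hinvsm⟩
  have hfderiv_g : ∀ x, fderiv ℝ g x = fderiv ℝ h x := by
    intro x
    rw [hgdef]
    exact fderiv_sub_const c
  set A : Euc m →L[ℝ] Euc m := fderiv ℝ g 0 with hA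
  set M : Matrix (Fin m) (Fin m) ℝ := (Matrix.toEuclideanCLM (𝕜 := ℝ)).symm A with hM
  have hPhiM : Phi M = A := by
    rw [hM, Phi, StarAlgEquiv.apply_symm_apply]
  have hdetM : 0 < M.det := by
    rw [hM, det_toEuclideanCLM_symm, hA, hfderiv_g]
    exact hor 0
  have hdetMne : M.det ≠ 0 := ne_of_gt hdetM
  have hAunit : IsUnit A := by
    rw [← hPhiM]; exact isUnit_Phi hdetMne
  have hdetMinv : 0 < (M⁻¹).det := by
    rw [Matrix.det_nonsing_inv, Ring.inverse_eq_inv']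
    exact inv_pos.2 hdetM
  obtain ⟨γ, hγsm, hγ0, hγ1, hγu⟩ := pth_of_pos_det (M⁻¹) hdetMinv
  set G : ℝ → Euc m → Euc m :=
    fun t x => ∫ s in (0:ℝ)..1, (fderiv ℝ g (s • (t • x))) x with hGdef
  have hG1 : ∀ x, G 1 x = g x := by
    intro x
    have h2 := Gmap_spec hg 1 x
    rw [hg0, sub_zero] at h2
    calc G 1 x = (1:ℝ) • G 1 x := (one_smul ℝ _).symm
      _ = g ((1:ℝ) • x) := h2
      _ = g x := by rw [one_smul]
  have hG0 : ∀ x, G 0 x = A x := by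
    intro x
    rw [hGdef]
    exact Gmap_zero x
  have hsd : ∀ a : ℝ, a ≠ 0 → IsDiffeo (fun x : Euc m => a • x) := by
    intro a ha
    exact isDiffeo_mk (f := fun x : Euc m => a • x) (g := fun x : Euc m => a⁻¹ • x) (contDiff_const_smul a) (contDiff_const_smul a⁻¹)
      (fun x => inv_smul_smul₀ ha x) (fun x => smul_inv_smul₀ ha x)
  have hGdiffeo : ∀ s : ℝ, IsDiffeo (G s) := by
    intro s
    by_cases hs : s = 0
    · subst hs
      have : G 0 = ⇑A := funext hG0
      rw [this]
      exact isDiffeo_clm_unit hAunit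
    · have hGs : G s = (fun y : Euc m => s⁻¹ • y) ∘ g ∘ (fun x : Euc m => s • x) := by
        funext x
        have hspec := Gmap_spec hg s x
        rw [hg0, sub_zero] at hspec
        have : G s x = s⁻¹ • (s • G s x) := (inv_smul_smul₀ hs _).symm
        rw [this, hGdef]
        simp only [Function.comp_apply]
        rw [hspec]
      rw [hGs]
      exact (hsd s⁻¹ (inv_ne_zero hs)).comp (hgdiffeo.comp (hsd s hs))
  set φ : ℝ → ℝ := Real.smoothTransition with hφ
  set δ : ℝ → (Euc m →L[ℝ] Euc m) := fun s => γ (1 - s) with hδ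
  have hδsm : ContDiff ℝ (⊤ : ℕ∞) δ := hγsm.comp (contDiff_const.sub contDiff_id)
  have hδ0 : δ 0 = 1 := by rw [hδ]; simpa using hγ1
  have hδ1 : δ 1 = Phi M⁻¹ := by rw [hδ]; simpa using hγ0
  have hδu : ∀ s ∈ Set.Icc (0:ℝ) 1, IsUnit (δ s) := by
    intro s hs
    exact hγu (1 - s) ⟨by linarith [hs.2], by linarith [hs.1]⟩
  refine ⟨fun t x => δ (φ (3*t - 2)) (G (1 - φ (3*t - 1)) x) + (1 - φ (3*t)) • c,
    ?_, ?_, ?_, ?_⟩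
  · -- joint smoothness
    apply ContDiff.contDiffOn
    have hGsm : ContDiff ℝ (⊤ : ℕ∞) (fun p : ℝ × Euc m => G p.1 p.2) := Gmap_smooth hg
    have hs2 : ContDiff ℝ (⊤ : ℕ∞) (fun p : ℝ × Euc m => (1 - φ (3*p.1 - 1), p.2)) := by
      refine ContDiff.prodMk ?_ contDiff_snd
      exact contDiff_const.sub ((Real.smoothTransition.contDiff).comp
        ((contDiff_const.mul contDiff_fst).sub contDiff_const))
    have hmid : ContDiff ℝ (⊤ : ℕ∞) (fun p : ℝ × Euc m => G (1 - φ (3*p.1 - 1)) p.2) :=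
      hGsm.comp hs2
    have houter : ContDiff ℝ (⊤ : ℕ∞) (fun p : ℝ × Euc m => δ (φ (3*p.1 - 2))) := by
      exact hδsm.comp ((Real.smoothTransition.contDiff).comp
        ((contDiff_const.mul contDiff_fst).sub contDiff_const))
    have happly : ContDiff ℝ (⊤ : ℕ∞)
        (fun p : ℝ × Euc m => δ (φ (3*p.1 - 2)) (G (1 - φ (3*p.1 - 1)) p.2)) :=
      houter.clm_apply hmid
    have hconst : ContDiff ℝ (⊤ : ℕ∞) (fun p : ℝ × Euc m => (1 - φ (3*p.1)) • c) := by
      exact (contDiff_const.sub ((Real.smoothTransition.contDiff).comp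
        (contDiff_const.mul contDiff_fst))).smul contDiff_const
    exact happly.add hconst
  · -- H 0 = h
    funext x
    have e1 : φ (3*(0:ℝ) - 2) = 0 := Real.smoothTransition.zero_of_nonpos (by norm_num)
    have e2 : φ (3*(0:ℝ) - 1) = 0 := Real.smoothTransition.zero_of_nonpos (by norm_num)
    have e3 : φ (3*(0:ℝ)) = 0 := Real.smoothTransition.zero_of_nonpos (by norm_num)
    simp only [e1, e2, e3, hδ0, sub_zero, one_smul]
    rw [hG1 x]
    simp [hgdef]
  · -- H 1 = id
    funext x
    have e1 : φ (3*(1:ℝ) - 2) = 1 := Real.smoothTransition.one_of_one_le (by norm_num)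
    have e2 : φ (3*(1:ℝ) - 1) = 1 := Real.smoothTransition.one_of_one_le (by norm_num)
    have e3 : φ (3*(1:ℝ)) = 1 := Real.smoothTransition.one_of_one_le (by norm_num)
    simp only [e1, e2, e3, hδ1, sub_self, zero_smul, add_zero]
    rw [hG0 x]
    have : Phi M⁻¹ (A x) = (Phi M⁻¹ * Phi M) x := by rw [hPhiM]; rfl
    rw [this, ← Phi_mul, Matrix.nonsing_inv_mul M (isUnit_iff_ne_zero.2 hdetMne), Phi_one]
    rfl
  · -- diffeo at each time
    intro t ht
    have hs3 : φ (3*t - 2) ∈ Set.Icc (0:ℝ) 1 :=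
      ⟨Real.smoothTransition.nonneg _, Real.smoothTransition.le_one _⟩
    have hLu : IsUnit (δ (φ (3*t - 2))) := hδu _ hs3
    have : (fun x => δ (φ (3*t - 2)) (G (1 - φ (3*t - 1)) x) + (1 - φ (3*t)) • c)
        = (fun y : Euc m => y + (1 - φ (3*t)) • c) ∘ ⇑(δ (φ (3*t - 2)))
          ∘ (G (1 - φ (3*t - 1))) := by
      funext x; rfl
    show IsDiffeo (fun x => δ (φ (3*t - 2)) (G (1 - φ (3*t - 1)) x) + (1 - φ (3*t)) • c)
    rw [this]
    exact (isDiffeo_translate _).comp ((isDiffeo_clm_unit hLu).comp (hGdiffeo _))
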